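/- Let k be a commutative field, n ≥ 1, and let F ∈ k[x₁, …, xₙ] be a homogeneous polynomial. If the only zero of F in kⁿ is the trivial zero (0, …, 0), then the only zero of F in k((t))ⁿ, where k((t)) is the field of formal Laurent series in one variable over k, is the trivial zero. -/

import Mathlib

open MvPolynomial

/-- Evaluating a homogeneous polynomial at a scaled point. -/
lemma aeval_mul_homog {k : Type*} [Field k] {n d : ℕ} {F : MvPolynomial (Fin n) k}
    (hF : F.IsHomogeneous d) {A : Type*} [CommRing A] [Algebra k A]
    (c : A) (z : Fin n → A) :
    MvPolynomial.aeval (fun i => c * z i) F = c ^ d * MvPolynomial.aeval z F := by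
  rw [aeval_def, aeval_def, eval₂_eq, eval₂_eq, Finset.mul_sum]
  refine Finset.sum_congr rfl fun m hm => ?_
  have hdm : ∑ i ∈ m.support, m i = d := by
    have h1 := hF (MvPolynomial.mem_support_iff.mp hm)
    rw [Finsupp.weight_apply] at h1
    rw [← h1]
    simp [Finsupp.sum]
  simp only [mul_pow, Finset.prod_mul_distrib, Finset.prod_pow_eq_pow_sum, hdm]
  ring

/-- If a homogeneous polynomial `F` in `n ≥ 1` variables over a field `k` has only the
trivial zero on `k`, then it has only the trivial zero on the field `k((t))` of formal Laurent
series in one variable over `k`. -/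
theorem only_trivial_zero_laurentSeries
    (k : Type*) [Field k] (n : ℕ) (hn : 1 ≤ n) (d : ℕ)
    (F : MvPolynomial (Fin n) k) (hF : F.IsHomogeneous d)
    (h : ∀ z : Fin n → k, MvPolynomial.eval z F = 0 → z = 0) :
    ∀ z : Fin n → LaurentSeries k, MvPolynomial.aeval z F = 0 → z = 0 := by
  classical
  intro z hz
  by_contra hne
  obtain ⟨i0, hi0⟩ : ∃ i, z i ≠ 0 := by
    by_contra hc; push_neg at hc
    exact hne (funext fun i => hc i)
  -- the set of indices with a nonzero component
  set S : Finset (Fin n) := Finset.univ.filter (fun i => z i ≠ 0) with hS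
  have hSne : S.Nonempty := ⟨i0, Finset.mem_filter.mpr ⟨Finset.mem_univ _, hi0⟩⟩
  set m : ℤ := S.inf' hSne (fun i => (z i).order) with hm
  obtain ⟨i1, hi1S, hi1⟩ := Finset.exists_mem_eq_inf' hSne (fun i => (z i).order)
  have hi1ne : z i1 ≠ 0 := (Finset.mem_filter.mp hi1S).2
  have hle : ∀ i, z i ≠ 0 → m ≤ (z i).order := fun i hi =>
    Finset.inf'_le (fun j => (z j).order)
      (Finset.mem_filter.mpr ⟨Finset.mem_univ i, hi⟩)
  -- the scaled components as power series
  set w : Fin n → PowerSeries k := fun i =>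
    if z i = 0 then 0
    else PowerSeries.X ^ ((z i).order - m).toNat * (z i).powerSeriesPart with hw
  have hkey : ∀ i, HahnSeries.ofPowerSeries ℤ k (w i)
      = HahnSeries.single (-m) (1 : k) * z i := by
    intro i
    by_cases hzi : z i = 0
    · simp [hw, hzi]
    · have hord : (((z i).order - m).toNat : ℤ) = (z i).order - m :=
        Int.toNat_of_nonneg (sub_nonneg.mpr (hle i hzi))
      rw [hw]
      simp only [if_neg hzi, map_mul, HahnSeries.ofPowerSeries_X_pow,
        LaurentSeries.ofPowerSeries_powerSeriesPart]
      rw [← mul_assoc, HahnSeries.single_mul_single, mul_one]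
      have : ((((z i).order - m).toNat : ℤ) + -(z i).order) = -m := by
        rw [hord]; ring
      rw [this]
  -- the algebra map compatibility
  have hcomp : (HahnSeries.ofPowerSeries ℤ k).comp (algebraMap k (PowerSeries k))
      = algebraMap k (LaurentSeries k) := rfl
  -- F vanishes at w over the power series ring
  have hzero : MvPolynomial.aeval w F = 0 := by
    apply HahnSeries.ofPowerSeries_injective (Γ := ℤ)
    rw [map_zero, aeval_def,
      MvPolynomial.eval₂_comp_left (HahnSeries.ofPowerSeries ℤ k), hcomp]
    have : (HahnSeries.ofPowerSeries ℤ k) ∘ w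
        = fun i => HahnSeries.single (-m) (1 : k) * z i := funext hkey
    rw [this, ← aeval_def]
    rw [aeval_mul_homog hF, hz, mul_zero]
  -- take constant coefficients
  have hconst : MvPolynomial.eval (fun i => (PowerSeries.constantCoeff (R := k)) (w i)) F = 0 := by
    have heq : (PowerSeries.constantCoeff (R := k)) (MvPolynomial.aeval w F)
        = MvPolynomial.eval (fun i => (PowerSeries.constantCoeff (R := k)) (w i)) F := by
      rw [aeval_def, MvPolynomial.eval₂_comp_left ((PowerSeries.constantCoeff (R := k)))]
      have h2 : ((PowerSeries.constantCoeff (R := k))).comp (algebraMap k (PowerSeries k))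
          = RingHom.id k := by
        ext r
        rw [RingHom.comp_apply, show (algebraMap k (PowerSeries k)) r = PowerSeries.C (R := k) r from rfl, PowerSeries.constantCoeff_C, RingHom.id_apply]
      rw [h2, MvPolynomial.eval, Function.comp_def]
      rfl
    rw [← heq, hzero, map_zero]
  -- but the constant coefficient at i1 is nonzero
  have hord1 : ((z i1).order - m).toNat = 0 := by rw [← hi1]; simp; exact ⟨i1, hi1S, by rw [hm, hi1]⟩
  have hne1 : (PowerSeries.constantCoeff (R := k)) (w i1) ≠ 0 := by
    rw [hw]
    simp only [if_neg hi1ne, hord1, pow_zero, one_mul]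
    rw [← PowerSeries.coeff_zero_eq_constantCoeff_apply,
      LaurentSeries.powerSeriesPart_coeff]
    rw [Nat.cast_zero, add_zero]
    exact mt HahnSeries.coeff_order_eq_zero.mp hi1ne
  exact hne1 (by simpa using congrFun (h _ hconst) i1)
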